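/- Let (K,v) be a valued field and let ω_{a,δ} denote the depth-zero valuation on K[x] given on (x−a)-expansions by ω_{a,δ}(∑ a_s (x−a)^s) = min_s (v(a_s) + sδ). Then for a, b ∈ K and δ, ε in the value group (with ∞ allowed), ω_{a,δ} ≤ ω_{b,ε} (pointwise on K[x]) if and only if δ ≤ min(v(b−a), ε). -/

import Mathlib

open Polynomial

section Preamble

variable {Λ : Type*} [AddCommGroup Λ] [LinearOrder Λ] [IsOrderedAddMonoid Λ]

/-- A (Krull) valuation on a commutative ring, written additively, with value `⊤` at `0`. -/
def IsVal {R : Type*} [CommRing R] (μ : R → WithTop Λ) : Prop :=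
  μ 0 = ⊤ ∧ μ 1 = 0 ∧ (∀ a b, μ (a * b) = μ a + μ b) ∧ ∀ a b, min (μ a) (μ b) ≤ μ (a + b)

variable {K : Type*} [Field K]

/-- `μ` is a valuation on `K[x]` whose restriction to `K` is `v`. -/
def ExtendsVal (v : K → WithTop Λ) (μ : Polynomial K → WithTop Λ) : Prop :=
  ∀ a : K, μ (Polynomial.C a) = v a

/-- `a ∼_μ b`: the initial terms of `a` and `b` in the graded algebra of `μ` coincide. -/
def MuEquiv (μ : Polynomial K → WithTop Λ) (a b : Polynomial K) : Prop :=
  (μ a = μ b ∧ μ a < μ (a - b)) ∨ (μ a = ⊤ ∧ μ b = ⊤)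

/-- `h ∣_μ g` : the initial term of `h` divides the initial term of `g` in the
graded algebra `G_μ`. -/
def MuDvd (μ : Polynomial K → WithTop Λ) (h g : Polynomial K) : Prop :=
  ∃ c, MuEquiv μ (h * c) g

/-- `g` is `μ`-minimal: `g ∤_μ f` for all nonzero `f` of degree smaller than `deg g`. -/
def MuMinimal (μ : Polynomial K → WithTop Λ) (g : Polynomial K) : Prop :=
  ∀ f : Polynomial K, f ≠ 0 → f.degree < g.degree → ¬ MuDvd μ g f

/-- `g` is `μ`-irreducible: the principal ideal of `G_μ` generated by the initial term of `g`
is a nonzero prime ideal. -/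
def MuIrreducible (μ : Polynomial K → WithTop Λ) (g : Polynomial K) : Prop :=
  μ g ≠ ⊤ ∧ ¬ MuDvd μ g 1 ∧ ∀ a b : Polynomial K, MuDvd μ g (a * b) → MuDvd μ g a ∨ MuDvd μ g b

/-- A (MacLane–Vaquié) key polynomial for `μ`: monic, `μ`-minimal and `μ`-irreducible. -/
def IsKeyPol (μ : Polynomial K → WithTop Λ) (φ : Polynomial K) : Prop :=
  φ.Monic ∧ MuMinimal μ φ ∧ MuIrreducible μ φ

/-- A key polynomial for `μ` of minimal degree. -/
def MinKeyPol (μ : Polynomial K → WithTop Λ) (φ : Polynomial K) : Prop :=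
  IsKeyPol μ φ ∧ ∀ ψ : Polynomial K, IsKeyPol μ ψ → φ.degree ≤ ψ.degree

/-- The coefficients of the `g`-adic expansion `f = ∑ a_s g^s`, `deg a_s < deg g`. -/
noncomputable def adicCoeff (g : Polynomial K) : Polynomial K → ℕ → Polynomial K
  | f, 0 => f %ₘ g
  | f, (s + 1) => adicCoeff g (f /ₘ g) s

/-- The truncation `μ_g` of `μ` : `μ_g (∑ a_s g^s) = min_s μ (a_s g^s)`. -/
noncomputable def truncVal (μ : Polynomial K → WithTop Λ) (g f : Polynomial K) : WithTop Λ :=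
  (Finset.range (f.natDegree + 1)).inf fun s => μ (adicCoeff g f s * g ^ s)

/-- The augmented valuation `[μ; φ, γ]`, acting on `φ`-expansions by
`ν(∑ a_s φ^s) = min_s (μ(a_s) + s γ)`. -/
noncomputable def augVal (μ : Polynomial K → WithTop Λ) (φ : Polynomial K) (γ : WithTop Λ)
    (f : Polynomial K) : WithTop Λ :=
  (Finset.range (f.natDegree + 1)).inf fun s => μ (adicCoeff φ f s) + s • γ

end Preamble


section DZHelpers

open Polynomial

variable {Λ : Type*} [AddCommGroup Λ] [LinearOrder Λ] [IsOrderedAddMonoid Λ] {K : Type*} [Field K] {v : K → WithTop Λ}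

lemma isval_pow_aux (hv : IsVal v) (c : K) (i : ℕ) : v (c ^ i) = i • v c := by
  induction i with
  | zero => simpa using hv.2.1
  | succ k ih => rw [pow_succ, hv.2.2.1, ih, succ_nsmul]

lemma isval_natCast_aux (hv : IsVal v) (n : ℕ) : 0 ≤ v (n : K) := by
  induction n with
  | zero => simp [hv.1]
  | succ k ih =>
      push_cast
      calc (0 : WithTop Λ) ≤ min (v (k : K)) (v 1) := le_min ih (le_of_eq hv.2.1.symm)
        _ ≤ v ((k : K) + 1) := hv.2.2.2 _ _

lemma isval_sum_aux (hv : IsVal v) {ι : Type*} (s : Finset ι) (f : ι → K) :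
    s.inf (fun i => v (f i)) ≤ v (∑ i ∈ s, f i) := by
  classical
  induction s using Finset.induction with
  | empty => simp [hv.1]
  | insert _ _ hns ih =>
      rename_i j s
      rw [Finset.sum_insert hns, Finset.inf_insert]
      exact le_trans (min_le_min le_rfl ih) (hv.2.2.2 _ _)

end DZHelpers

/-- The depth-zero valuation `ω_{a,δ}`, acting on `(x - a)`-expansions by
`ω_{a,δ}(∑ a_s (x-a)^s) = min_s (v(a_s) + s δ)`. -/
noncomputable def depthZeroVal {K : Type*} [Field K] {Λ : Type*}
    [AddCommGroup Λ] [LinearOrder Λ] [IsOrderedAddMonoid Λ] (v : K → WithTop Λ) (a : K) (δ : WithTop Λ)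
    (f : Polynomial K) : WithTop Λ :=
  (Finset.range (f.natDegree + 1)).inf fun s => v ((Polynomial.taylor a f).coeff s) + s • δ

/-- `ω_{a,δ} ≤ ω_{b,ε}` pointwise on `K[x]` if and only if
`δ ≤ min (v (b - a)) ε`. -/
theorem depthZero_le_iff {K : Type*} [Field K] {Λ : Type*}
    [AddCommGroup Λ] [LinearOrder Λ] [IsOrderedAddMonoid Λ] (v : K → WithTop Λ) (hv : IsVal v)
    (a b : K) (δ ε : WithTop Λ) :
    (∀ f : Polynomial K, depthZeroVal v a δ f ≤ depthZeroVal v b ε f) ↔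
      δ ≤ min (v (b - a)) ε := by
  constructor
  · intro h
    have key := h (X - C a)
    have h1 : depthZeroVal v a δ (X - C a) = δ := by
      rw [depthZeroVal, natDegree_X_sub_C]
      rw [show Finset.range (1 + 1) = {0, 1} from rfl]
      simp [map_sub, taylor_X, taylor_C, hv.1, hv.2.1]
    have h2 : depthZeroVal v b ε (X - C a) = min (v (b - a)) ε := by
      rw [depthZeroVal, natDegree_X_sub_C]
      rw [show Finset.range (1 + 1) = {0, 1} from rfl]
      have ht : taylor b (X - C a) = X + C (b - a) := by
        rw [map_sub, taylor_X, taylor_C, C_sub]; ring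
      simp [ht, hv.2.1]
    rwa [h1, h2] at key
  · intro h f
    have hδ1 : δ ≤ v (b - a) := h.trans (min_le_left _ _)
    have hδ2 : δ ≤ ε := h.trans (min_le_right _ _)
    rw [depthZeroVal, depthZeroVal]
    apply Finset.le_inf
    intro t _
    set g := taylor a f with hgdef
    have hg : g.natDegree = f.natDegree := natDegree_taylor f a
    set T : ℕ → K := fun i => ((i + t).choose t : K) * g.coeff (i + t) * (b - a) ^ i with hT
    have hd : (taylor b f).coeff t = ∑ i ∈ Finset.range (f.natDegree + 1), T i := by
      have h3 : taylor b f = taylor (b - a) g := by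
        rw [hgdef, taylor_taylor, sub_add_cancel]
      have hdeg : (hasseDeriv t g).natDegree < f.natDegree + 1 := by
        have := (natDegree_hasseDeriv_le g t).trans (Nat.sub_le _ _)
        omega
      rw [h3, taylor_coeff, eval_eq_sum_range' hdeg]
      simp [hasseDeriv_coeff, T]
    have hle : (Finset.range (f.natDegree + 1)).inf (fun i => v (T i)) ≤
        v ((taylor b f).coeff t) := by
      rw [hd]; exact isval_sum_aux hv _ _
    obtain ⟨i, hi, hinf⟩ := Finset.exists_mem_eq_inf (Finset.range (f.natDegree + 1))
      (Finset.nonempty_range_iff.mpr (Nat.succ_ne_zero _)) (fun i => v (T i))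
    have hterm : v (g.coeff (i + t)) + (i + t) • δ ≤ v (T i) + t • ε := by
      calc v (g.coeff (i + t)) + (i + t) • δ
          = 0 + (v (g.coeff (i + t)) + i • δ) + t • δ := by
            rw [add_nsmul, zero_add, add_assoc]
        _ ≤ v (((i + t).choose t : K)) + (v (g.coeff (i + t)) + i • v (b - a)) + t • ε :=
            add_le_add (add_le_add (isval_natCast_aux hv _)
              (add_le_add le_rfl (nsmul_le_nsmul_right hδ1 i)))
              (nsmul_le_nsmul_right hδ2 t)
        _ = v (T i) + t • ε := by
            rw [hT]
            simp only [hv.2.2.1, isval_pow_aux hv, mul_assoc]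
    have hmain : (Finset.range (f.natDegree + 1)).inf
        (fun s => v (g.coeff s) + s • δ) ≤ v (g.coeff (i + t)) + (i + t) • δ := by
      by_cases hit : i + t ≤ f.natDegree
      · exact Finset.inf_le (Finset.mem_range.mpr (by omega))
      · have : g.coeff (i + t) = 0 :=
          coeff_eq_zero_of_natDegree_lt (by omega)
        rw [this, hv.1, top_add]
        exact le_top
    calc (Finset.range (f.natDegree + 1)).inf (fun s => v (g.coeff s) + s • δ)
        ≤ v (T i) + t • ε := hmain.trans hterm
      _ ≤ v ((taylor b f).coeff t) + t • ε := add_le_add_left (hinf ▸ hle) _
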